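/- There exist constants C > 0 and ε₀ ∈ (0, 1) with the following property: for every ε ∈ (0, ε₀] there exist real numbers a, b with 1/2 ≤ a < b < 1 and a continuously differentiable, strictly positive, decreasing function ℓ : [a, b] → ℝ such that ℓ(b) + ε · ( ℓ(a)^{−2} + ∫_a^b ℓ(z)^{−2} dz + ℓ(b)^{−1} )² ≤ C ε^{1/3}. -/

import Mathlib

open MeasureTheory intervalIntegral

/-- Scaling upper bound for the one-dimensional reduction of Busse's multi-α
construction for Howard's problem (eq. (6.5)): there are `C > 0` and `ε₀ ∈ (0,1)`
such that for every `ε ∈ (0,ε₀]` there exist `1/2 ≤ a < b < 1` and a continuously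
differentiable, strictly positive, decreasing lengthscale function `ℓ` on `[a,b]`
satisfying `ℓ(b) + ε (ℓ(a)⁻² + ∫_a^b ℓ⁻² + ℓ(b)⁻¹)² ≤ C ε^{1/3}`. -/
theorem stmt12 :
    ∃ C > (0:ℝ), ∃ ε₀ ∈ Set.Ioo (0:ℝ) 1, ∀ ε ∈ Set.Ioc (0:ℝ) ε₀,
      ∃ a b : ℝ, 1/2 ≤ a ∧ a < b ∧ b < 1 ∧
        ∃ ℓ : ℝ → ℝ, ContDiff ℝ 1 ℓ ∧
          (∀ z ∈ Set.Icc a b, 0 < ℓ z) ∧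
          StrictAntiOn ℓ (Set.Icc a b) ∧
          ℓ b + ε * (1 / (ℓ a) ^ 2 + (∫ z in a..b, 1 / (ℓ z) ^ 2) + 1 / ℓ b) ^ 2
            ≤ C * ε ^ ((1:ℝ)/3) := by
  refine ⟨100, by norm_num, 1/27, ⟨by norm_num, by norm_num⟩, ?_⟩
  rintro ε ⟨hε0, hε1⟩
  set t : ℝ := ε ^ ((1:ℝ)/3) with ht
  have ht0 : 0 < t := Real.rpow_pos_of_pos hε0 _
  have ht3 : t ^ 3 = ε := by
    rw [ht, ← Real.rpow_natCast (ε ^ ((1:ℝ)/3)) 3, ← Real.rpow_mul hε0.le]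
    norm_num
  have htle : t ≤ 1/3 := by
    have : t ^ 3 ≤ (1/3:ℝ)^3 := by rw [ht3]; norm_num; linarith
    exact le_of_pow_le_pow_left₀ (by norm_num) (by norm_num) this
  refine ⟨1/2, 1 - t, le_refl _, by linarith, by linarith, fun z => 1 - z, ?_, ?_, ?_, ?_⟩
  · exact (contDiff_const.sub contDiff_id)
  · rintro z ⟨hz1, hz2⟩; simp only []; linarith
  · intro x hx y hy hxy; simp only []; linarith
  · -- compute the integral
    have hint : (∫ z in (1/2:ℝ)..(1 - t), 1 / (1 - z) ^ 2)
        = (1 - (1 - t))⁻¹ - (1 - (1/2:ℝ))⁻¹ := by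
      refine intervalIntegral.integral_eq_sub_of_hasDerivAt (f := fun z => (1 - z)⁻¹) ?_ ?_
      · intro x hx
        rw [Set.uIcc_of_le (by linarith)] at hx
        have hne : (1:ℝ) - x ≠ 0 := by
          have := hx.2; intro h; nlinarith
        have h1 : HasDerivAt (fun z : ℝ => 1 - z) (-1) x := by
          simpa using (hasDerivAt_id x).const_sub (1:ℝ)
        have := h1.inv hne
        convert this using 1
        · rfl
        · funext z; simp
        · ring
      · apply ContinuousOn.intervalIntegrable
        apply ContinuousOn.div continuousOn_const
        · exact (continuousOn_const.sub continuousOn_id).pow 2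
        · intro x hx
          rw [Set.uIcc_of_le (by linarith)] at hx
          have h2 : (0:ℝ) < 1 - x := by linarith [hx.2]
          exact (pow_pos h2 2).ne'
    simp only []
    rw [hint]
    have h1 : (1:ℝ) - (1 - t) = t := by ring
    rw [h1]
    have hε : ε = t ^ 3 := ht3.symm
    rw [hε]
    have key : t + t ^ 3 * (1 / (1 - 1/2) ^ 2 + (t⁻¹ - (1 - 1/2:ℝ)⁻¹) + 1 / t) ^ 2
        ≤ 100 * t := by
      have h2 : (1 / (1 - 1/2:ℝ) ^ 2 + (t⁻¹ - (1 - 1/2:ℝ)⁻¹) + 1 / t) = 2 + 2 / t := by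
        rw [one_div]; field_simp; ring
      rw [h2]
      have h3 : t ^ 3 * (2 + 2 / t) ^ 2 = t * (2 * t + 2) ^ 2 := by
        field_simp
      rw [h3]
      nlinarith [sq_nonneg t, ht0.le]
    exact key
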